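/- Let V : ℝⁿ → ℝⁿ be twice continuously differentiable and let u(x) = c − ‖x‖²/(2n) for a real constant c (so ∇u(x) = −x/n, Hess u ≡ −(1/n)I and Δu ≡ −1). Define the vector field W(x) = (div V(x))·∇u(x) − D_V(x)ᵀ·∇u(x) − D_V(x)·∇u(x), where D_V(x) is the Jacobian matrix of V at x. Then for every x ∈ ℝⁿ: Δ(y ↦ V(y)·∇u(y))(x) + div W(x) + div V(x) = 0. (This is the interior computation showing that the shape derivative u′ of the Robin torsion function on a ball is harmonic.) -/

import Mathlib

open MeasureTheory Metric
open scoped RealInnerProductSpace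

/-- The Laplacian of `f : ℝⁿ → ℝ` at `x`, defined as the sum of the pure second
directional derivatives along the standard basis vectors of `EuclideanSpace ℝ (Fin n)`. -/
noncomputable def laplacian {n : ℕ} (f : EuclideanSpace ℝ (Fin n) → ℝ)
    (x : EuclideanSpace ℝ (Fin n)) : ℝ :=
  ∑ i : Fin n,
    fderiv ℝ (fun y => fderiv ℝ f y (EuclideanSpace.single i 1)) x (EuclideanSpace.single i 1)

/-- The divergence of a vector field `F : ℝⁿ → ℝⁿ` at `x`: the trace of its Jacobian,
computed as `∑ i ⟪D_F(x) eᵢ, eᵢ⟫` over the standard basis. -/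
noncomputable def diverg {n : ℕ} (F : EuclideanSpace ℝ (Fin n) → EuclideanSpace ℝ (Fin n))
    (x : EuclideanSpace ℝ (Fin n)) : ℝ :=
  ∑ i : Fin n, ⟪fderiv ℝ F x (EuclideanSpace.single i 1), EuclideanSpace.single i 1⟫

theorem grad_u_aux {n : ℕ} (hn : 0 < n) (c : ℝ) (u : EuclideanSpace ℝ (Fin n) → ℝ)
    (hu : ∀ x, u x = c - ‖x‖ ^ 2 / (2 * n)) (x : EuclideanSpace ℝ (Fin n)) :
    HasGradientAt u (-(n:ℝ)⁻¹ • x) x := by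
  rw [hasGradientAt_iff_hasFDerivAt]
  have h1 : HasFDerivAt (fun y : EuclideanSpace ℝ (Fin n) => ⟪y, y⟫)
      ((fderivInnerCLM ℝ (x,x)).comp
      ((ContinuousLinearMap.id ℝ _).prod (ContinuousLinearMap.id ℝ _))) x :=
    (hasFDerivAt_id x).inner ℝ (hasFDerivAt_id x)
  have h2 : HasFDerivAt u (-((2*(n:ℝ))⁻¹ • ((fderivInnerCLM ℝ (x,x)).comp
      ((ContinuousLinearMap.id ℝ _).prod (ContinuousLinearMap.id ℝ _))))) x := by
    have h3 : HasFDerivAt (fun y : EuclideanSpace ℝ (Fin n) => c - (2*(n:ℝ))⁻¹ * ⟪y, y⟫) _ x :=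
      (h1.const_mul ((2*(n:ℝ))⁻¹)).const_sub c
    refine h3.congr_of_eventuallyEq ?_
    filter_upwards with y
    rw [hu y, real_inner_self_eq_norm_sq, div_eq_inv_mul]
  refine h2.congr_fderiv ?_
  ext h
  have hn' : (n:ℝ) ≠ 0 := Nat.cast_ne_zero.mpr hn.ne'
  simp [fderivInnerCLM_apply, real_inner_smul_left, real_inner_comm x h]
  ring

theorem sum_inner_single_aux {n : ℕ} (v : EuclideanSpace ℝ (Fin n)) :
    ∑ i : Fin n, ⟪v, EuclideanSpace.single i (1:ℝ)⟫ • EuclideanSpace.single i (1:ℝ) = v := by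
  have h := (EuclideanSpace.basisFun (Fin n) ℝ).sum_repr v
  simpa [EuclideanSpace.basisFun_apply, OrthonormalBasis.repr_apply_apply,
    real_inner_comm] using h

/-- Interior computation for the harmonicity of the shape derivative of the Robin torsion
function of a ball: for `u(x) = c − ‖x‖²/(2n)` (so `∇u(x) = −x/n`, `Hess u ≡ −(1/n)I`,
`Δu ≡ −1`), a `C²` vector field `V`, and the auxiliary field
`W = (div V)∇u − D_Vᵀ∇u − D_V∇u`, one has `Δ(V·∇u) + div W + div V = 0` everywhere. -/
theorem shape_derivative_interior_equation (n : ℕ) (hn : 2 ≤ n) (c : ℝ)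
    (V : EuclideanSpace ℝ (Fin n) → EuclideanSpace ℝ (Fin n)) (hV : ContDiff ℝ 2 V)
    (u : EuclideanSpace ℝ (Fin n) → ℝ) (hu : ∀ x, u x = c - ‖x‖ ^ 2 / (2 * n))
    (W : EuclideanSpace ℝ (Fin n) → EuclideanSpace ℝ (Fin n))
    (hW : ∀ x, W x = (diverg V x) • gradient u x
      - ContinuousLinearMap.adjoint (fderiv ℝ V x) (gradient u x)
      - fderiv ℝ V x (gradient u x)) :
    ∀ x, laplacian (fun y => ⟪V y, gradient u y⟫) x + diverg W x + diverg V x = 0 := by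
  intro x
  have hn0 : 0 < n := lt_of_lt_of_le (by norm_num) hn
  have hnR : (n:ℝ) ≠ 0 := Nat.cast_ne_zero.mpr hn0.ne'
  set e : Fin n → EuclideanSpace ℝ (Fin n) := fun i => EuclideanSpace.single i (1:ℝ) with he
  -- basic derivative facts
  have hVd : ∀ y, HasFDerivAt V (fderiv ℝ V y) y :=
    fun y => (hV.differentiable (by norm_num) y).hasFDerivAt
  have hA1 : ContDiff ℝ 1 (fderiv ℝ V) := hV.fderiv_right (by norm_num)
  have hBd : ∀ y, HasFDerivAt (fderiv ℝ V) (fderiv ℝ (fderiv ℝ V) y) y :=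
    fun y => (hA1.differentiable one_ne_zero y).hasFDerivAt
  set A : EuclideanSpace ℝ (Fin n) →L[ℝ] EuclideanSpace ℝ (Fin n) := fderiv ℝ V x with hA
  set B := fderiv ℝ (fderiv ℝ V) x with hB
  have hsymm : ∀ v w, B v w = B w v := fun v w => second_derivative_symmetric hVd (hBd x) v w
  have hgrad : ∀ y, gradient u y = -(n:ℝ)⁻¹ • y := fun y => (grad_u_aux hn0 c u hu y).gradient
  have hei : ∀ i j : Fin n, ⟪e i, e j⟫ = if i = j then (1:ℝ) else 0 := by
    intro i j
    simp [he, EuclideanSpace.inner_single_left, EuclideanSpace.single_apply, eq_comm]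
  -- ## Laplacian part
  have hφeq : (fun y => ⟪V y, gradient u y⟫) = fun y => -(n:ℝ)⁻¹ * ⟪V y, y⟫ := by
    funext y; rw [hgrad y, real_inner_smul_right]
  have hφ : ∀ y, HasFDerivAt (fun z => -(n:ℝ)⁻¹ * ⟪V z, z⟫)
      ((-(n:ℝ)⁻¹) • ((fderivInnerCLM ℝ (V y, y)).comp
        ((fderiv ℝ V y).prod (ContinuousLinearMap.id ℝ _)))) y :=
    fun y => ((hVd y).inner ℝ (hasFDerivAt_id y)).const_mul _
  have hψ : ∀ i : Fin n,
      (fun y => fderiv ℝ (fun z => -(n:ℝ)⁻¹ * ⟪V z, z⟫) y (e i))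
      = fun y => -(n:ℝ)⁻¹ * (⟪V y, e i⟫ + ⟪fderiv ℝ V y (e i), y⟫) := by
    intro i; funext y
    rw [(hφ y).fderiv]
    simp only [ContinuousLinearMap.smul_apply, ContinuousLinearMap.coe_comp', Function.comp_apply,
      ContinuousLinearMap.prod_apply, ContinuousLinearMap.id_apply, ContinuousLinearMap.add_apply,
      ContinuousLinearMap.zero_apply, ContinuousLinearMap.flip_apply, fderivInnerCLM_apply,
      smul_eq_mul, map_zero, inner_zero_right, add_zero, zero_add]
  have hlap : laplacian (fun y => ⟪V y, gradient u y⟫) x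
      = -(n:ℝ)⁻¹ * (2 * diverg V x + ∑ i, ⟪x, B (e i) (e i)⟫) := by
    rw [hφeq]
    unfold laplacian
    have key : ∀ i : Fin n,
        fderiv ℝ (fun y => fderiv ℝ (fun z => -(n:ℝ)⁻¹ * ⟪V z, z⟫) y (e i)) x (e i)
        = -(n:ℝ)⁻¹ * (2 * ⟪A (e i), e i⟫ + ⟪x, B (e i) (e i)⟫) := by
      intro i
      rw [hψ i]
      have h1 : HasFDerivAt (fun y => ⟪V y, e i⟫) _ x :=
        (hVd x).inner ℝ (hasFDerivAt_const (e i) x)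
      have h3 : HasFDerivAt (fun y => ⟪fderiv ℝ V y (e i), y⟫) _ x :=
        ((hBd x).clm_apply (hasFDerivAt_const (e i) x)).inner ℝ (hasFDerivAt_id x)
      have h4 : HasFDerivAt
          (fun y => -(n:ℝ)⁻¹ * (⟪V y, e i⟫ + ⟪fderiv ℝ V y (e i), y⟫)) _ x :=
        (h1.add h3).const_mul (-(n:ℝ)⁻¹)
      rw [h4.fderiv]
      simp only [ContinuousLinearMap.smul_apply, ContinuousLinearMap.coe_comp', Function.comp_apply,
        ContinuousLinearMap.prod_apply, ContinuousLinearMap.id_apply, ContinuousLinearMap.add_apply,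
        ContinuousLinearMap.zero_apply, ContinuousLinearMap.flip_apply, fderivInnerCLM_apply,
        smul_eq_mul, map_zero, inner_zero_right, inner_zero_left, add_zero, zero_add, ← hA, ← hB]
      rw [real_inner_comm (B (e i) (e i)) x]
      ring
    rw [Finset.sum_congr rfl (fun i _ => key i)]
    unfold diverg
    rw [← hA, ← Finset.mul_sum, Finset.sum_add_distrib, ← Finset.mul_sum]
  -- ## Divergence of W part
  have hWrepr : ∀ y, W y = ∑ i, (-(n:ℝ)⁻¹ * ((diverg V y) * ⟪y, e i⟫
      - ⟪y, fderiv ℝ V y (e i)⟫ - ⟪fderiv ℝ V y y, e i⟫)) • e i := by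
    intro y
    conv_lhs => rw [← sum_inner_single_aux (W y)]
    refine Finset.sum_congr rfl fun i _ => ?_
    rw [he]
    congr 1
    rw [hW y, hgrad y, ContinuousLinearMap.map_smul, ContinuousLinearMap.map_smul]
    simp only [inner_sub_left, real_inner_smul_left, ContinuousLinearMap.adjoint_inner_left]
    ring
  have hdV : ∃ L : EuclideanSpace ℝ (Fin n) →L[ℝ] ℝ, HasFDerivAt (diverg V) L x ∧
      ∀ v, L v = ∑ j, ⟪B v (e j), e j⟫ := by
    have h : HasFDerivAt (fun y => ∑ j : Fin n, ⟪fderiv ℝ V y (e j), e j⟫) _ x :=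
      HasFDerivAt.fun_sum (fun j (_ : j ∈ Finset.univ) =>
        ((hBd x).clm_apply (hasFDerivAt_const (e j) x)).inner ℝ (hasFDerivAt_const (e j) x))
    refine ⟨_, h.congr_of_eventuallyEq ?_, fun v => ?_⟩
    · filter_upwards with y; rfl
    · simp only [ContinuousLinearMap.sum_apply, ContinuousLinearMap.coe_comp', Function.comp_apply,
        ContinuousLinearMap.prod_apply, ContinuousLinearMap.add_apply, ContinuousLinearMap.zero_apply,
        ContinuousLinearMap.flip_apply, fderivInnerCLM_apply, map_zero, inner_zero_right,
        inner_zero_left, add_zero, zero_add, ← hB]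
  obtain ⟨LD, hLD, hLDv⟩ := hdV
  have hwd : ∀ i : Fin n, ∃ L : EuclideanSpace ℝ (Fin n) →L[ℝ] ℝ,
      HasFDerivAt (fun y => -(n:ℝ)⁻¹ * ((diverg V y) * ⟪y, e i⟫
        - ⟪y, fderiv ℝ V y (e i)⟫ - ⟪fderiv ℝ V y y, e i⟫)) L x ∧
      L (e i) = -(n:ℝ)⁻¹ * ((∑ j, ⟪B (e i) (e j), e j⟫) * ⟪x, e i⟫ + diverg V x * ⟪e i, e i⟫
        - (⟪e i, A (e i)⟫ + ⟪x, B (e i) (e i)⟫) - (⟪A (e i), e i⟫ + ⟪B (e i) x, e i⟫)) := by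
    intro i
    have h1 : HasFDerivAt (fun y => diverg V y * ⟪y, e i⟫) _ x :=
      hLD.mul ((hasFDerivAt_id x).inner ℝ (hasFDerivAt_const (e i) x))
    have h2 : HasFDerivAt (fun y => ⟪y, fderiv ℝ V y (e i)⟫) _ x :=
      (hasFDerivAt_id x).inner ℝ ((hBd x).clm_apply (hasFDerivAt_const (e i) x))
    have h3 : HasFDerivAt (fun y => ⟪fderiv ℝ V y y, e i⟫) _ x :=
      ((hBd x).clm_apply (hasFDerivAt_id x)).inner ℝ (hasFDerivAt_const (e i) x)
    have h4 : HasFDerivAt _ _ x := ((h1.sub h2).sub h3).const_mul (-(n:ℝ)⁻¹)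
    refine ⟨_, h4, ?_⟩
    simp only [ContinuousLinearMap.smul_apply, ContinuousLinearMap.coe_comp', Function.comp_apply,
      ContinuousLinearMap.prod_apply, ContinuousLinearMap.id_apply, ContinuousLinearMap.add_apply,
      ContinuousLinearMap.zero_apply, ContinuousLinearMap.flip_apply, ContinuousLinearMap.coe_sub',
      Pi.sub_apply, fderivInnerCLM_apply, smul_eq_mul, map_zero, inner_zero_right, inner_zero_left,
      add_zero, zero_add, id_eq, inner_add_left, inner_add_right, ← hA, ← hB, hLDv]
    ring
  choose L hL hLv using hwd
  have hWd : HasFDerivAt W (∑ i, (L i).smulRight (e i)) x := by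
    have h := HasFDerivAt.fun_sum (fun i (_ : i ∈ (Finset.univ : Finset (Fin n))) =>
      (hL i).smul_const (e i))
    exact h.congr_of_eventuallyEq (Filter.Eventually.of_forall fun y => hWrepr y)
  have hdivW : diverg W x = ∑ i, L i (e i) := by
    unfold diverg
    rw [hWd.fderiv]
    refine Finset.sum_congr rfl fun i _ => ?_
    rw [ContinuousLinearMap.sum_apply, sum_inner]
    simp only [ContinuousLinearMap.smulRight_apply, real_inner_smul_left, ← he, hei,
      mul_ite, mul_one, mul_zero]
    change ∑ j, L j (e i) * ⟪e j, e i⟫ = L i (e i)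
    simp [hei]
  -- ## symmetry identity
  have hx : ∀ i, B (e i) x = ∑ j, ⟪x, e j⟫ • B (e i) (e j) := by
    intro i
    conv_lhs => rw [← sum_inner_single_aux x]
    rw [map_sum]
    exact Finset.sum_congr rfl fun j _ => by rw [ContinuousLinearMap.map_smul]
  have hTT : ∑ i, ⟪B (e i) x, e i⟫ = ∑ i, (∑ j, ⟪B (e i) (e j), e j⟫) * ⟪x, e i⟫ :=
    calc ∑ i, ⟪B (e i) x, e i⟫
        = ∑ i, ∑ j, ⟪x, e j⟫ * ⟪B (e i) (e j), e i⟫ := by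
          refine Finset.sum_congr rfl fun i _ => ?_
          rw [hx i, sum_inner]
          simp only [real_inner_smul_left]
      _ = ∑ j, ∑ i, ⟪x, e j⟫ * ⟪B (e j) (e i), e i⟫ := by
          rw [Finset.sum_comm]
          exact Finset.sum_congr rfl fun j _ => Finset.sum_congr rfl fun i _ => by rw [hsymm]
      _ = ∑ i, (∑ j, ⟪B (e i) (e j), e j⟫) * ⟪x, e i⟫ := by
          refine Finset.sum_congr rfl fun j _ => ?_
          rw [Finset.sum_mul]
          exact Finset.sum_congr rfl fun i _ => by ring
  have hsum : ∑ i, L i (e i)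
      = -(n:ℝ)⁻¹ * ((n:ℝ) * diverg V x - 2 * diverg V x - ∑ i, ⟪x, B (e i) (e i)⟫) := by
    rw [Finset.sum_congr rfl fun i _ => hLv i, ← Finset.mul_sum]
    congr 1
    have step : ∀ i : Fin n, (∑ j, ⟪B (e i) (e j), e j⟫) * ⟪x, e i⟫ + diverg V x * ⟪e i, e i⟫
        - (⟪e i, A (e i)⟫ + ⟪x, B (e i) (e i)⟫) - (⟪A (e i), e i⟫ + ⟪B (e i) x, e i⟫)
        = (∑ j, ⟪B (e i) (e j), e j⟫) * ⟪x, e i⟫ + diverg V x - ⟪A (e i), e i⟫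
          - ⟪x, B (e i) (e i)⟫ - ⟪A (e i), e i⟫ - ⟪B (e i) x, e i⟫ := by
      intro i
      rw [hei i i, if_pos rfl, real_inner_comm (e i) (A (e i))]
      ring
    rw [Finset.sum_congr rfl fun i _ => step i]
    simp only [Finset.sum_sub_distrib, Finset.sum_add_distrib, Finset.sum_const,
      Finset.card_univ, Fintype.card_fin, nsmul_eq_mul]
    rw [hTT]
    have hD : ∑ i, ⟪A (e i), e i⟫ = diverg V x := rfl
    rw [hD]
    ring
  rw [hlap, hdivW, hsum]
  field_simp
  ring
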